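/- With the same 3SAT-to-PPCFG construction: if the 3SAT instance is satisfiable, then there exists a parameter setting p (choosing x_i → x_{i,T} when the satisfying assignment sets x_i true, and x_i → x_{i,F} otherwise) such that every clause symbol c_i is derivable from START in Γ_p. -/

import Mathlib

/-- One rewriting step using some rule from the rule set `R`. -/
def CFProduces {T N : Type*} (R : Set (ContextFreeRule T N))
    (u v : List (Symbol T N)) : Prop :=
  ∃ r ∈ R, r.Rewrites u v

/-- Derivation: reflexive-transitive closure of single rewriting steps. -/
def CFDerives {T N : Type*} (R : Set (ContextFreeRule T N)) :
    List (Symbol T N) → List (Symbol T N) → Prop :=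
  Relation.ReflTransGen (CFProduces R)

/-- The language generated from start symbol `S` by the rules `R`. -/
def CFLanguage {T N : Type*} (R : Set (ContextFreeRule T N)) (S : N) :
    Set (List T) :=
  { w | CFDerives R [Symbol.nonterminal S] (w.map Symbol.terminal) }

/-- Nonterminals of the 3SAT grammar: `START`, the variable symbols `x i`, and
the truth-marked variable symbols `x_{i,T}` and `x_{i,F}`. -/
inductive SatNT (n : ℕ)
  | start
  | x (i : Fin n)
  | xT (i : Fin n)
  | xF (i : Fin n)

/-- The PPCFG `Γ_p` built from a 3SAT instance with `n` variables and `m`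
clauses, where `pos c j` (resp. `neg c j`) means the literal `x j` (resp.
`¬ x j`) occurs in clause `c`.  Terminals are the clause symbols.  Fixed
productions: `START → x 1 ⋯ x n`, `x i → ε` for all `i`, `x_{j,T} → c` whenever
`x j ∈ c`, and `x_{j,F} → c` whenever `¬ x j ∈ c`.  The parameter setting
`p : Fin n → Bool` chooses, in each group `(x i → x_{i,T}, x i → x_{i,F})`,
the first production iff `p i = true`. -/
def satRules {n m : ℕ} (pos neg : Fin m → Fin n → Bool) (p : Fin n → Bool) :
    Set (ContextFreeRule (Fin m) (SatNT n)) :=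
  {⟨SatNT.start, List.ofFn fun i : Fin n => Symbol.nonterminal (SatNT.x i)⟩} ∪
  { r | ∃ i : Fin n, r = ⟨SatNT.x i, []⟩ } ∪
  { r | ∃ i : Fin n,
      r = ⟨SatNT.x i, [Symbol.nonterminal (if p i then SatNT.xT i else SatNT.xF i)]⟩ } ∪
  { r | ∃ c : Fin m, ∃ j : Fin n, pos c j = true ∧ r = ⟨SatNT.xT j, [Symbol.terminal c]⟩ } ∪
  { r | ∃ c : Fin m, ∃ j : Fin n, neg c j = true ∧ r = ⟨SatNT.xF j, [Symbol.terminal c]⟩ }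

/-- The 3SAT instance is satisfiable: some truth assignment makes every clause true. -/
def SatSatisfiable {n m : ℕ} (pos neg : Fin m → Fin n → Bool) : Prop :=
  ∃ a : Fin n → Bool, ∀ c : Fin m, ∃ j : Fin n,
    (pos c j = true ∧ a j = true) ∨ (neg c j = true ∧ a j = false)

/-- Each clause contains at most three literals (it is a 3SAT instance). -/
def ThreeBounded {n m : ℕ} (pos neg : Fin m → Fin n → Bool) : Prop :=
  ∀ c : Fin m, (Finset.univ.filter fun j : Fin n => pos c j = true ∨ neg c j = true).card ≤ 3


section Aux
variable {T N : Type*} {R : Set (ContextFreeRule T N)}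

lemma CFDerives.append_left {u v : List (Symbol T N)} (h : CFDerives R u v)
    (w : List (Symbol T N)) : CFDerives R (w ++ u) (w ++ v) := by
  induction h with
  | refl => exact Relation.ReflTransGen.refl
  | tail _ hstep ih =>
    obtain ⟨r, hr, hrw⟩ := hstep
    exact ih.tail ⟨r, hr, hrw.append_left w⟩

lemma CFDerives.append_right {u v : List (Symbol T N)} (h : CFDerives R u v)
    (w : List (Symbol T N)) : CFDerives R (u ++ w) (v ++ w) := by
  induction h with
  | refl => exact Relation.ReflTransGen.refl
  | tail _ hstep ih =>
    obtain ⟨r, hr, hrw⟩ := hstep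
    exact ih.tail ⟨r, hr, hrw.append_right w⟩

lemma CFDerives.single {u v : List (Symbol T N)} {r : ContextFreeRule T N}
    (hr : r ∈ R) (hrw : r.Rewrites u v) : CFDerives R u v :=
  Relation.ReflTransGen.single ⟨r, hr, hrw⟩

end Aux

lemma erase_list {n m : ℕ} {pos neg : Fin m → Fin n → Bool} {p : Fin n → Bool}
    (l : List (Fin n)) :
    CFDerives (satRules pos neg p)
      (l.map fun i => Symbol.nonterminal (SatNT.x i)) [] := by
  induction l with
  | nil => exact Relation.ReflTransGen.refl
  | cons a t ih =>
    refine Relation.ReflTransGen.head ?_ ih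
    refine ⟨⟨SatNT.x a, []⟩, ?_, ?_⟩
    · left; left; left; right; exact ⟨a, rfl⟩
    · exact ContextFreeRule.Rewrites.head _

/-- If the 3SAT instance is satisfiable, then there exists a parameter setting
`p` — namely choosing `x i → x_{i,T}` exactly when the satisfying assignment `a`
sets `x i` true, i.e. `p = a` — such that every clause symbol is derivable from
`START` in `Γ_p`. -/
theorem ppcfg_setting_of_sat {n m : ℕ} (pos neg : Fin m → Fin n → Bool)
    (h3 : ThreeBounded pos neg)
    (hsat : SatSatisfiable pos neg) :
    ∃ p : Fin n → Bool,
      (∀ c : Fin m, ∃ j : Fin n,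
        (pos c j = true ∧ p j = true) ∨ (neg c j = true ∧ p j = false)) ∧
      ∀ c : Fin m, [c] ∈ CFLanguage (satRules pos neg p) SatNT.start := by
  obtain ⟨a, ha⟩ := hsat
  refine ⟨a, ha, fun c => ?_⟩
  obtain ⟨j, hj⟩ := ha c
  have hmem : j ∈ List.finRange n := List.mem_finRange j
  obtain ⟨s, t, hst⟩ := List.append_of_mem hmem
  -- step 1: start rule
  have h1 : CFDerives (satRules pos neg a) [Symbol.nonterminal SatNT.start]
      (List.ofFn fun i : Fin n => Symbol.nonterminal (SatNT.x i)) := by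
    exact CFDerives.single
      (r := ⟨SatNT.start, List.ofFn fun i : Fin n => Symbol.nonterminal (SatNT.x i)⟩)
      (by left; left; left; left; rfl) ContextFreeRule.Rewrites.input_output
  have hofn : (List.ofFn fun i : Fin n => Symbol.nonterminal (SatNT.x i) :
      List (Symbol (Fin m) (SatNT n)))
      = ((s.map fun i => Symbol.nonterminal (SatNT.x i)) ++
        ([Symbol.nonterminal (SatNT.x j)] ++
          (t.map fun i => Symbol.nonterminal (SatNT.x i)))) := by
    rw [List.ofFn_eq_map, hst]
    simp
  -- erase s and t
  have h2 : CFDerives (satRules pos neg a)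
      ((s.map fun i => Symbol.nonterminal (SatNT.x i)) ++
        ([Symbol.nonterminal (SatNT.x j)] ++
          (t.map fun i => Symbol.nonterminal (SatNT.x i))))
      [Symbol.nonterminal (SatNT.x j)] := by
    have hs := (erase_list (pos := pos) (neg := neg) (p := a) s).append_right
      ([Symbol.nonterminal (SatNT.x j)] ++ (t.map fun i => Symbol.nonterminal (SatNT.x i)))
    have ht := ((erase_list (pos := pos) (neg := neg) (p := a) t).append_left
      [Symbol.nonterminal (SatNT.x j)])
    simpa [CFDerives] using hs.trans (by simpa [CFDerives] using ht)
  -- choose xT or xF and finish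
  have h3 : CFDerives (satRules pos neg a) [Symbol.nonterminal (SatNT.x j)]
      [Symbol.terminal c] := by
    rcases hj with ⟨hpos, haj⟩ | ⟨hneg, haj⟩
    · refine Relation.ReflTransGen.head
        ⟨⟨SatNT.x j, [Symbol.nonterminal (if a j then SatNT.xT j else SatNT.xF j)]⟩,
          by left; left; right; exact ⟨j, rfl⟩,
          ContextFreeRule.Rewrites.input_output⟩ ?_
      rw [haj]
      exact CFDerives.single (r := ⟨SatNT.xT j, [Symbol.terminal c]⟩)
        (by left; right; exact ⟨c, j, hpos, rfl⟩) ContextFreeRule.Rewrites.input_output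
    · refine Relation.ReflTransGen.head
        ⟨⟨SatNT.x j, [Symbol.nonterminal (if a j then SatNT.xT j else SatNT.xF j)]⟩,
          by left; left; right; exact ⟨j, rfl⟩,
          ContextFreeRule.Rewrites.input_output⟩ ?_
      rw [haj]
      exact CFDerives.single (r := ⟨SatNT.xF j, [Symbol.terminal c]⟩)
        (by right; exact ⟨c, j, hneg, rfl⟩) ContextFreeRule.Rewrites.input_output
  show CFDerives (satRules pos neg a) [Symbol.nonterminal SatNT.start] _
  simpa [CFDerives] using (h1.trans (hofn ▸ h2)).trans h3
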